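/- Suppose ρ : ℝ → [0,1] is even, continuous, nondecreasing on [0,∞) with ρ(0) = 0 and sup ρ = 1, and F is a distribution on ℝ with continuous distribution function. Fix b ∈ (0,1) and t ∈ ℝ. If P_F(X = t) < 1 − b, then the map s ↦ E_F[ρ((X − t)/s)] on (0,∞) is continuous, nonincreasing in s, tends to 0 as s → ∞, and tends to P_F(X ≠ t) as s → 0⁺; consequently there exists s > 0 with E_F[ρ((X − t)/s)] = b. -/

import Mathlib

open MeasureTheory Filter Set Topology

/-- Existence of the M-scale `σ(F,t)`: for an even, continuous loss `ρ` with
values in `[0,1]`, nondecreasing on `[0,∞)`, `ρ(0)=0`, `sup ρ = 1`, a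
distribution `F` (a probability measure `μ`) with continuous distribution
function, `b ∈ (0,1)` and `t` with `P_F(X = t) < 1 - b`, the map
`s ↦ E_F[ρ((X - t)/s)]` is continuous and nonincreasing on `(0,∞)`, tends to
`0` as `s → ∞` and to `P_F(X ≠ t)` as `s → 0⁺`; hence it takes the value `b`. -/
theorem mscale_exists (ρ : ℝ → ℝ) (μ : Measure ℝ) [IsProbabilityMeasure μ] (b t : ℝ)
    (hρ_range : ∀ u, ρ u ∈ Set.Icc (0 : ℝ) 1)
    (hρ_even : ∀ u, ρ (-u) = ρ u)
    (hρ_cont : Continuous ρ)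
    (hρ_mono : MonotoneOn ρ (Set.Ici 0))
    (hρ0 : ρ 0 = 0)
    (hρ_sup : (⨆ u : ℝ, ρ u) = 1)
    (hb : b ∈ Set.Ioo (0 : ℝ) 1)
    (hcdf : Continuous fun x : ℝ => (μ (Set.Iic x)).toReal)
    (hatom : (μ {t}).toReal < 1 - b) :
    ContinuousOn (fun s : ℝ => ∫ x, ρ ((x - t) / s) ∂μ) (Set.Ioi 0) ∧
    AntitoneOn (fun s : ℝ => ∫ x, ρ ((x - t) / s) ∂μ) (Set.Ioi 0) ∧
    Tendsto (fun s : ℝ => ∫ x, ρ ((x - t) / s) ∂μ) atTop (𝓝 0) ∧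
    Tendsto (fun s : ℝ => ∫ x, ρ ((x - t) / s) ∂μ) (𝓝[>] 0) (𝓝 ((μ {t}ᶜ).toReal)) ∧
    ∃ s : ℝ, 0 < s ∧ ∫ x, ρ ((x - t) / s) ∂μ = b := by
  have hρ0' : ∀ u, 0 ≤ ρ u := fun u => (hρ_range u).1
  have hρ1 : ∀ u, ρ u ≤ 1 := fun u => (hρ_range u).2
  have hρ_abs : ∀ u, ρ u = ρ |u| := by
    intro u
    rcases abs_cases u with ⟨h, _⟩ | ⟨h, _⟩
    · rw [h]
    · rw [h, hρ_even]
  -- ρ tends to 1 at +∞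
  have hρ_tendsto : Tendsto ρ atTop (𝓝 1) := by
    rw [Metric.tendsto_atTop]
    intro ε hε
    have h1 : (1 : ℝ) - ε < ⨆ u : ℝ, ρ u := by rw [hρ_sup]; linarith
    obtain ⟨u₀, hu₀⟩ := exists_lt_of_lt_ciSup h1
    refine ⟨|u₀|, fun u hu => ?_⟩
    have habs : (0:ℝ) ≤ |u₀| := abs_nonneg _
    have hρu : ρ |u₀| ≤ ρ u :=
      hρ_mono (mem_Ici.2 habs) (mem_Ici.2 (le_trans habs hu)) hu
    have : 1 - ε < ρ u := lt_of_lt_of_le (by rwa [← hρ_abs]) hρu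
    rw [Real.dist_eq, abs_lt]
    constructor <;> nlinarith [hρ1 u]
  have hmeas : ∀ s : ℝ, AEStronglyMeasurable (fun x => ρ ((x - t) / s)) μ :=
    fun s => (hρ_cont.comp ((continuous_id.sub continuous_const).div_const s)).aestronglyMeasurable
  have hnorm : ∀ s x : ℝ, ‖ρ ((x - t) / s)‖ ≤ 1 := by
    intro s x
    rw [Real.norm_eq_abs, abs_of_nonneg (hρ0' _)]
    exact hρ1 _
  have hint : ∀ s : ℝ, Integrable (fun x => ρ ((x - t) / s)) μ := by
    intro s
    exact (integrable_const (1:ℝ)).mono' (hmeas s) (Eventually.of_forall (hnorm s))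
  -- continuity
  have hcont : ContinuousOn (fun s : ℝ => ∫ x, ρ ((x - t) / s) ∂μ) (Set.Ioi 0) := by
    intro s₀ hs₀
    refine (continuousAt_of_dominated (bound := fun _ => (1:ℝ))
      (Eventually.of_forall hmeas)
      (Eventually.of_forall fun s => Eventually.of_forall (hnorm s))
      (integrable_const 1) ?_).continuousWithinAt
    refine Eventually.of_forall fun x => ?_
    exact hρ_cont.continuousAt.comp
      (continuousAt_const.div continuousAt_id (ne_of_gt hs₀))
  -- antitone
  have hanti : AntitoneOn (fun s : ℝ => ∫ x, ρ ((x - t) / s) ∂μ) (Set.Ioi 0) := by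
    intro s hs s' hs' hss'
    refine integral_mono (hint s') (hint s) fun x => ?_
    have hs0 : (0:ℝ) < s := hs
    have hs'0 : (0:ℝ) < s' := hs'
    rw [hρ_abs ((x - t) / s'), hρ_abs ((x - t) / s), abs_div, abs_div,
      abs_of_pos hs0, abs_of_pos hs'0]
    refine hρ_mono (mem_Ici.2 (by positivity)) (mem_Ici.2 (by positivity)) ?_
    exact div_le_div_of_nonneg_left (abs_nonneg _) hs0 hss'
  -- tendsto atTop
  have htop : Tendsto (fun s : ℝ => ∫ x, ρ ((x - t) / s) ∂μ) atTop (𝓝 0) := by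
    have := tendsto_integral_filter_of_dominated_convergence (μ := μ)
      (F := fun s x => ρ ((x - t) / s)) (f := fun _ => (0:ℝ)) (bound := fun _ => (1:ℝ))
      (l := atTop)
      (Eventually.of_forall hmeas)
      (Eventually.of_forall fun s => Eventually.of_forall (hnorm s))
      (integrable_const 1)
      (Eventually.of_forall fun x => ?_)
    · simpa using this
    · have h1 : Tendsto (fun s : ℝ => (x - t) / s) atTop (𝓝 0) :=
        tendsto_const_nhds.div_atTop tendsto_id
      have := (hρ_cont.tendsto 0).comp h1
      rwa [hρ0] at this
  -- compl measure
  have hμc : (μ {t}).toReal + (μ {t}ᶜ).toReal = 1 := by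
    have h1 : μ {t} + μ {t}ᶜ = 1 := by
      rw [measure_add_measure_compl (measurableSet_singleton t), measure_univ]
    have h2 := congrArg ENNReal.toReal h1
    rwa [ENNReal.toReal_add (measure_ne_top μ _) (measure_ne_top μ _)] at h2
  -- tendsto at 0+
  have hzero : Tendsto (fun s : ℝ => ∫ x, ρ ((x - t) / s) ∂μ) (𝓝[>] 0)
      (𝓝 ((μ {t}ᶜ).toReal)) := by
    have hlim : ∀ x : ℝ, Tendsto (fun s : ℝ => ρ ((x - t) / s)) (𝓝[>] 0)
        (𝓝 (Set.indicator ({t}ᶜ) (fun _ => (1:ℝ)) x)) := by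
      intro x
      by_cases hx : x = t
      · subst hx
        simp only [sub_self, zero_div, hρ0, Set.indicator_apply, Set.mem_compl_iff,
          Set.mem_singleton_iff, not_true]
        simpa [hρ0] using (tendsto_const_nhds : Tendsto (fun _ : ℝ => (0:ℝ)) (𝓝[>] 0) (𝓝 0))
      · have hx0 : 0 < |x - t| := abs_pos.2 (sub_ne_zero.2 hx)
        have h1 : Tendsto (fun s : ℝ => |x - t| / s) (𝓝[>] 0) atTop := by
          have := tendsto_inv_nhdsGT_zero.const_mul_atTop hx0
          simpa [div_eq_mul_inv] using this
        have h2 : Tendsto (fun s : ℝ => ρ (|x - t| / s)) (𝓝[>] 0) (𝓝 1) :=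
          hρ_tendsto.comp h1
        have heq : ∀ᶠ s in 𝓝[>] (0:ℝ), ρ (|x - t| / s) = ρ ((x - t) / s) := by
          filter_upwards [self_mem_nhdsWithin] with s hs
          rw [hρ_abs ((x - t) / s), abs_div, abs_of_pos (mem_Ioi.1 hs)]
        have h3 := h2.congr' heq
        simpa [Set.indicator_apply, hx] using h3
    have := tendsto_integral_filter_of_dominated_convergence (μ := μ)
      (F := fun s x => ρ ((x - t) / s)) (f := Set.indicator ({t}ᶜ) (fun _ => (1:ℝ)))
      (bound := fun _ => (1:ℝ)) (l := 𝓝[>] (0:ℝ))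
      (Eventually.of_forall hmeas)
      (Eventually.of_forall fun s => Eventually.of_forall (hnorm s))
      (integrable_const 1)
      (Eventually.of_forall hlim)
    have hind : ∫ x, Set.indicator ({t}ᶜ) (fun _ => (1:ℝ)) x ∂μ = (μ {t}ᶜ).toReal := by
      rw [integral_indicator_const (1:ℝ) (measurableSet_singleton t).compl]
      simp
      rfl
    rwa [hind] at this
  refine ⟨hcont, hanti, htop, hzero, ?_⟩
  -- existence via IVT
  have hAb : b < (μ {t}ᶜ).toReal := by linarith
  have h1 : ∀ᶠ s in 𝓝[>] (0:ℝ), b < ∫ x, ρ ((x - t) / s) ∂μ :=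
    hzero.eventually (eventually_gt_nhds hAb)
  obtain ⟨s₁, hs₁mem, hs₁⟩ := (h1.and self_mem_nhdsWithin).exists
  have hs₁pos : 0 < s₁ := hs₁
  have h2 : ∀ᶠ s in atTop, ∫ x, ρ ((x - t) / s) ∂μ < b :=
    htop.eventually (eventually_lt_nhds hb.1)
  obtain ⟨s₂, hs₂, hs₂ge⟩ := (h2.and (eventually_ge_atTop s₁)).exists
  have hsub : Set.Icc s₁ s₂ ⊆ Set.Ioi 0 := fun x hx => lt_of_lt_of_le hs₁pos hx.1
  have hiv := intermediate_value_Icc' hs₂ge (hcont.mono hsub)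
  have hbmem : b ∈ Set.Icc ((fun s : ℝ => ∫ x, ρ ((x - t) / s) ∂μ) s₂)
      ((fun s : ℝ => ∫ x, ρ ((x - t) / s) ∂μ) s₁) := ⟨le_of_lt hs₂, le_of_lt hs₁mem⟩
  obtain ⟨s, hsmem, hseq⟩ := hiv hbmem
  exact ⟨s, lt_of_lt_of_le hs₁pos hsmem.1, hseq⟩
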